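/- For any strings u, v over Σ and any two distinct strings x, y over Σ: x ≺ y in V-order if and only if uxv ≺ uyv (where uxv and uyv denote the concatenations of u, x, v and of u, y, v respectively). -/

import Mathlib

variable {α : Type*} [LinearOrder α]

/-- The star operation on strings: delete the letter `x_h`, where `h` is the
start of the longest non-decreasing suffix (so `h = 1` iff the whole string is
non-decreasing, and otherwise `x_{h-1} > x_h ≤ x_{h+1} ≤ ⋯ ≤ x_n`). -/
def vstar : List α → List α
  | [] => []
  | a :: t => if List.IsChain (· ≤ ·) (a :: t) then t else a :: vstar t

/-- V-order `≺` between distinct strings `x`, `y`: either `x` lies on the path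
`y, y*, y^{2*}, …, ε`, or (if neither lies on the path of the other) taking the
least `s, t` with `x^{(s+1)*} = y^{(t+1)*}` and the greatest position `j` at
which `s = x^{s*}` and `t = y^{t*}` differ, the letter of `x^{s*}` at `j` is
smaller than that of `y^{t*}`. -/
def VLess (x y : List α) : Prop :=
  (∃ k : ℕ, 0 < k ∧ vstar^[k] y = x) ∨
  ((¬ ∃ k : ℕ, vstar^[k] y = x) ∧ (¬ ∃ k : ℕ, vstar^[k] x = y) ∧
    ∃ s t : ℕ,
      vstar^[s + 1] x = vstar^[t + 1] y ∧
      (∀ s' t' : ℕ, vstar^[s' + 1] x = vstar^[t' + 1] y → s ≤ s' ∧ t ≤ t') ∧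
      ∃ j : ℕ, j < (vstar^[s] x).length ∧
        (∀ j' : ℕ, j < j' → (vstar^[s] x)[j']? = (vstar^[t] y)[j']?) ∧
        ∃ a b : α, (vstar^[s] x)[j]? = some a ∧ (vstar^[t] y)[j]? = some b ∧
          a < b)


/-- colexicographic (rightmost-difference) strict order on lists -/
def clt : List α → List α → Prop
  | a :: A, b :: B => clt A B ∨ (A = B ∧ a < b)
  | _, _ => False

@[simp] lemma clt_nil_left (B : List α) : ¬ clt [] B := by cases B <;> simp [clt]

@[simp] lemma clt_nil_right (A : List α) : ¬ clt A [] := by cases A <;> simp [clt]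

lemma clt_cons_iff {a b : α} {A B : List α} :
    clt (a :: A) (b :: B) ↔ clt A B ∨ (A = B ∧ a < b) := Iff.rfl

lemma clt_irrefl (A : List α) : ¬ clt A A := by
  induction A with
  | nil => simp
  | cons a A ih => rw [clt_cons_iff]; rintro (h | ⟨-, h⟩); exact ih h; exact lt_irrefl _ h

lemma clt_ne {A B : List α} (h : clt A B) : A ≠ B := by
  rintro rfl; exact clt_irrefl _ h

lemma clt_length {A B : List α} (h : clt A B) : A.length = B.length := by
  induction A generalizing B with
  | nil => simp at h
  | cons a A ih =>
    cases B with
    | nil => simp at h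
    | cons b B =>
      rcases h with h | ⟨rfl, -⟩
      · simp [ih h]
      · rfl

lemma clt_trans {A B C : List α} (h1 : clt A B) (h2 : clt B C) : clt A C := by
  induction A generalizing B C with
  | nil => simp at h1
  | cons a A ih =>
    cases B with
    | nil => simp at h1
    | cons b B =>
      cases C with
      | nil => simp at h2
      | cons c C =>
        rw [clt_cons_iff] at h1 h2 ⊢
        rcases h1 with h1 | ⟨rfl, h1⟩ <;> rcases h2 with h2 | ⟨rfl, h2⟩
        · exact Or.inl (ih h1 h2)
        · exact Or.inl h1
        · exact Or.inl h2
        · exact Or.inr ⟨rfl, lt_trans h1 h2⟩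

lemma clt_asymm {A B : List α} (h1 : clt A B) (h2 : clt B A) : False :=
  clt_irrefl A (clt_trans h1 h2)

lemma clt_total {A B : List α} (hl : A.length = B.length) (hne : A ≠ B) :
    clt A B ∨ clt B A := by
  induction A generalizing B with
  | nil => cases B with | nil => exact absurd rfl hne | cons b B => simp at hl
  | cons a A ih =>
    cases B with
    | nil => simp at hl
    | cons b B =>
      simp only [List.length_cons, Nat.succ_inj] at hl
      by_cases hAB : A = B
      · subst hAB
        have hab : a ≠ b := by simpa using hne
        rcases lt_or_gt_of_ne hab with h | h
        · exact Or.inl (Or.inr ⟨rfl, h⟩)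
        · exact Or.inr (Or.inr ⟨rfl, h⟩)
      · rcases ih hl hAB with h | h
        · exact Or.inl (Or.inl h)
        · exact Or.inr (Or.inl h)

lemma clt_append_left_iff (p A B : List α) :
    clt (p ++ A) (p ++ B) ↔ clt A B := by
  induction p with
  | nil => rfl
  | cons c p ih =>
    simp only [List.cons_append, clt_cons_iff, ih, List.append_cancel_left_eq, lt_irrefl,
      and_false, or_false]

lemma clt_append_singleton_iff (c : α) (A B : List α) :
    clt (A ++ [c]) (B ++ [c]) ↔ clt A B := by
  induction A generalizing B with
  | nil =>
    cases B with
    | nil => simp [clt_irrefl]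
    | cons b B =>
      simp only [List.nil_append, List.cons_append, clt_cons_iff]
      constructor
      · rintro (h | ⟨h, -⟩)
        · simp at h
        · exact absurd h (by simp)
      · intro h; simp at h
  | cons a A ih =>
    cases B with
    | nil =>
      simp only [List.cons_append, List.nil_append, clt_cons_iff]
      constructor
      · rintro (h | ⟨h, -⟩)
        · rcases A with _ | ⟨x, A⟩ <;> simp [clt] at h
        · simp at h
      · intro h; simp at h
    | cons b B =>
      simp only [List.cons_append, clt_cons_iff, ih, List.append_left_inj]

/-! ### vstar basics -/

@[simp] lemma vstar_nil : vstar ([] : List α) = [] := rfl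

lemma chain'_vstar {z : List α} (h : List.IsChain (· ≤ ·) z) : vstar z = z.tail := by
  cases z with
  | nil => rfl
  | cons a t => simp [vstar, h]

lemma vstar_decomp (z : List α) (hz : z ≠ []) :
    ∃ p c q, z = p ++ c :: q ∧ vstar z = p ++ q ∧ List.IsChain (· ≤ ·) (c :: q) ∧
      ∀ x ∈ p.getLast?, c < x := by
  induction z with
  | nil => exact absurd rfl hz
  | cons a t ih =>
    by_cases h : List.IsChain (· ≤ ·) (a :: t)
    · exact ⟨[], a, t, rfl, by simp [vstar, h], h, by simp⟩
    · have ht : t ≠ [] := by rintro rfl; exact h (List.isChain_singleton a)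
      obtain ⟨p, c, q, hzt, hv, hc, hp⟩ := ih ht
      refine ⟨a :: p, c, q, by simp [hzt], ?_, hc, ?_⟩
      · simp [vstar, h, hv]
      · intro x hx
        cases p with
        | nil =>
          simp at hx
          subst hx
          by_contra hac
          push_neg at hac
          exact h (by rw [hzt] at *; exact List.isChain_cons_cons.2 ⟨hac, hc⟩)
        | cons p0 p' =>
          apply hp
          simpa using hx

lemma length_vstar {z : List α} (hz : z ≠ []) : (vstar z).length + 1 = z.length := by
  obtain ⟨p, c, q, h1, h2, -, -⟩ := vstar_decomp z hz
  rw [h2, h1]; simp; omega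

lemma length_vstar_iterate (w : List α) (k : ℕ) :
    (vstar^[k] w).length = w.length - k := by
  induction k with
  | zero => simp
  | succ k ih =>
    rw [Function.iterate_succ_apply']
    by_cases h : vstar^[k] w = []
    · rw [h]
      simp only [vstar_nil, List.length_nil]
      rw [h] at ih
      simp at ih
      omega
    · have := length_vstar h
      omega

/-- last-letter behaviour of vstar -/
lemma last_vstar_cases {z : List α} (hz : z ≠ []) :
    ∃ c, z.getLast? = some c ∧
      ((vstar z).getLast? = some c ∨
        (z = vstar z ++ [c] ∧ ∀ d ∈ (vstar z).getLast?, c < d)) := by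
  obtain ⟨p, c', q, h1, h2, hc, hp⟩ := vstar_decomp z hz
  cases q with
  | nil =>
    refine ⟨c', ?_, Or.inr ⟨by rw [h2, h1]; simp, ?_⟩⟩
    · rw [h1, List.getLast?_append_cons]; simp
    · rw [h2]; simpa using hp
  | cons d q' =>
    refine ⟨(d :: q').getLast (by simp), ?_, Or.inl ?_⟩
    · rw [h1, List.getLast?_append_cons, List.getLast?_cons_cons,
        List.getLast?_eq_getLast (l := d :: q') (by simp)]
    · rw [h2, List.getLast?_append, List.getLast?_eq_getLast (l := d :: q') (by simp)]
      simp

/-! ### crux comparison lemmas -/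

lemma cltS_gt {b : α} : ∀ (q : List α) (c : α), List.IsChain (· ≤ ·) (c :: q) →
    (∀ d ∈ (c :: q).getLast?, b < d) → clt (q ++ [b]) (c :: q) := by
  intro q
  induction q with
  | nil =>
    intro c _ hlast
    have : b < c := hlast c (by simp)
    exact Or.inr ⟨rfl, this⟩
  | cons d q' ih =>
    intro c hc hlast
    have hcd : c ≤ d := List.isChain_cons_cons.1 hc |>.1
    refine Or.inl (ih d (List.isChain_cons_cons.1 hc).2 ?_)
    intro e he
    apply hlast
    rwa [List.getLast?_cons_cons]

lemma cltS_le {b : α} : ∀ (q : List α) (c : α), List.IsChain (· ≤ ·) (c :: q) →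
    (∀ d ∈ (c :: q).getLast?, d ≤ b) → c :: q ≠ q ++ [b] → clt (c :: q) (q ++ [b]) := by
  intro q
  induction q with
  | nil =>
    intro c _ hlast hne
    have h1 : c ≤ b := hlast c (by simp)
    have h2 : c ≠ b := by simpa using hne
    exact Or.inr ⟨rfl, lt_of_le_of_ne h1 h2⟩
  | cons d q' ih =>
    intro c hc hlast hne
    have hcd : c ≤ d := (List.isChain_cons_cons.1 hc).1
    rw [List.cons_append, clt_cons_iff]
    by_cases heq : d :: q' = q' ++ [b]
    · refine Or.inr ⟨heq, lt_of_le_of_ne hcd ?_⟩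
      rintro rfl
      exact hne (by rw [List.cons_append, ← heq])
    · refine Or.inl (ih d (List.isChain_cons_cons.1 hc).2 ?_ heq)
      intro e he
      apply hlast
      rwa [List.getLast?_cons_cons]

/-- inserting a small letter (smaller than last of p) beats prepending anything -/
lemma clt_insSmall : ∀ (p : List α) (c : α) (q : List α) (a : α), p ≠ [] →
    (∀ e ∈ p.getLast?, c < e) → clt (p ++ c :: q) (a :: (p ++ q)) := by
  intro p
  induction p with
  | nil => intro c q a h; exact absurd rfl h
  | cons e p' ih =>
    intro c q a _ hlast
    cases p' with
    | nil =>
      have hce : c < e := hlast e (by simp)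
      exact Or.inl (Or.inr ⟨rfl, hce⟩)
    | cons f p'' =>
      refine Or.inl (ih c q e (by simp) ?_)
      intro x hx
      apply hlast
      rwa [List.getLast?_cons_cons]

lemma cruxP {a : α} {z : List α} (h : ¬ List.IsChain (· ≤ ·) (a :: z)) :
    clt z (a :: vstar z) := by
  have hz : z ≠ [] := by rintro rfl; exact h (List.isChain_singleton a)
  obtain ⟨p, c, q, h1, h2, hc, hp⟩ := vstar_decomp z hz
  cases p with
  | nil =>
    simp only [List.nil_append] at h1 h2
    have hca : c < a := by
      by_contra hac
      push_neg at hac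
      rw [h1] at h
      exact h (List.isChain_cons_cons.2 ⟨hac, hc⟩)
    rw [h2, h1]
    exact Or.inr ⟨rfl, hca⟩
  | cons e p' =>
    rw [h2, h1]
    exact clt_insSmall (e :: p') c q a (by simp) hp

/-! ### the path indexed by length -/

/-- `g w m` = the ancestor of `w` of length `m` on the vstar-path (for `m ≤ |w|`). -/
def gfun (w : List α) (m : ℕ) : List α := vstar^[w.length - m] w

lemma length_gfun (w : List α) {m : ℕ} (hm : m ≤ w.length) : (gfun w m).length = m := by
  rw [gfun, length_vstar_iterate]; omega

@[simp] lemma gfun_top (w : List α) : gfun w w.length = w := by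
  simp [gfun]

lemma gfun_zero (w : List α) : gfun w 0 = [] := by
  have := length_gfun w (Nat.zero_le w.length)
  exact List.length_eq_zero_iff.1 this

lemma vstar_gfun (w : List α) {m : ℕ} (hm : m + 1 ≤ w.length) :
    vstar (gfun w (m + 1)) = gfun w m := by
  have e : w.length - m = (w.length - (m+1)) + 1 := by omega
  rw [gfun, gfun, e, Function.iterate_succ_apply']

lemma gfun_gfun (w : List α) {m m' : ℕ} (h1 : m ≤ m') (h2 : m' ≤ w.length) :
    gfun (gfun w m') m = gfun w m := by
  rw [gfun, gfun, gfun, length_vstar_iterate, ← Function.iterate_add_apply]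
  congr 1
  omega

lemma gfun_iterate (w : List α) (k : ℕ) : vstar^[k] w = gfun w (w.length - k) := by
  by_cases hk : k ≤ w.length
  · rw [gfun]
    congr 1
    omega
  · have e0 : w.length - (w.length - k) = w.length := by omega
    have h2 : ∀ j, vstar^[w.length + j] w = vstar^[w.length] w := by
      intro j
      induction j with
      | zero => rfl
      | succ j ih =>
        have hnil : (vstar^[w.length] w) = [] := by
          apply List.length_eq_zero_iff.1
          rw [length_vstar_iterate]; omega
        rw [← Nat.add_assoc, Function.iterate_succ_apply', ih, hnil, vstar_nil]
    rw [gfun, e0]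
    conv_lhs => rw [show k = w.length + (k - w.length) by omega]
    exact h2 _

/-! ### single steps for suffix -/

@[simp] lemma vstar_singleton (b : α) : vstar [b] = [] := by
  simp [vstar]

lemma ss_le {w : List α} {b c : α} (hc : w.getLast? = some c) (h : c ≤ b) :
    vstar (w ++ [b]) = vstar w ++ [b] := by
  induction w with
  | nil => simp at hc
  | cons a t ih =>
    cases t with
    | nil =>
      simp only [List.getLast?_singleton, Option.some_inj] at hc
      subst hc
      have hch : List.IsChain (· ≤ ·) [a, b] := List.isChain_pair.2 h
      simp [vstar, hch]
    | cons d t' =>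
      rw [List.getLast?_cons_cons] at hc
      have hlast : List.IsChain (· ≤ ·) (a :: (d :: t') ++ [b]) ↔
          List.IsChain (· ≤ ·) (a :: d :: t') := by
        rw [List.isChain_append]
        constructor
        · tauto
        · intro hch
          refine ⟨hch, List.isChain_singleton b, ?_⟩
          intro x hx y hy
          simp only [List.head?_cons, Option.mem_def, Option.some_inj] at hy
          subst hy
          rw [List.getLast?_cons_cons, hc] at hx
          simp only [Option.mem_def, Option.some_inj] at hx
          subst hx
          exact h
      by_cases hch : List.IsChain (· ≤ ·) (a :: d :: t')
      · have h1 : vstar ((a :: d :: t') ++ [b]) = (d :: t') ++ [b] := by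
          rw [List.cons_append]
          show (if List.IsChain (· ≤ ·) (a :: ((d :: t') ++ [b])) then (d :: t') ++ [b]
            else a :: vstar ((d :: t') ++ [b])) = _
          rw [if_pos (by rw [← List.cons_append]; exact hlast.2 hch)]
        rw [h1]
        show _ = (if List.IsChain (· ≤ ·) (a :: d :: t') then d :: t'
            else a :: vstar (d :: t')) ++ [b]
        rw [if_pos hch]
      · have h1 : vstar ((a :: d :: t') ++ [b]) = a :: vstar ((d :: t') ++ [b]) := by
          rw [List.cons_append]
          show (if List.IsChain (· ≤ ·) (a :: ((d :: t') ++ [b])) then (d :: t') ++ [b]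
            else a :: vstar ((d :: t') ++ [b])) = _
          rw [if_neg (by rw [← List.cons_append]; exact fun hh => hch (hlast.1 hh))]
        rw [h1, ih hc]
        show _ = (if List.IsChain (· ≤ ·) (a :: d :: t') then d :: t'
            else a :: vstar (d :: t')) ++ [b]
        rw [if_neg hch]
        rfl

lemma ss_gt {w : List α} {b c : α} (hc : w.getLast? = some c) (h : b < c) :
    vstar (w ++ [b]) = w := by
  induction w with
  | nil => simp at hc
  | cons a t ih =>
    have hnch : ¬ List.IsChain (· ≤ ·) ((a :: t) ++ [b]) := by
      rw [List.isChain_append]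
      rintro ⟨-, -, hr⟩
      have := hr c (by rwa [Option.mem_def]) b (by simp)
      exact absurd this (not_le.2 h)
    cases t with
    | nil =>
      simp only [List.getLast?_singleton, Option.some_inj] at hc
      subst hc
      show (if List.IsChain (· ≤ ·) (a :: [b]) then [b] else a :: vstar [b]) = [a]
      rw [if_neg (by simpa using hnch)]
      simp
    | cons d t' =>
      rw [List.getLast?_cons_cons] at hc
      rw [List.cons_append]
      show (if List.IsChain (· ≤ ·) (a :: ((d :: t') ++ [b])) then (d :: t') ++ [b]
        else a :: vstar ((d :: t') ++ [b])) = _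
      rw [if_neg (by rwa [← List.cons_append]), ih hc]

/-! ### monotone predicates along the path -/

def Qb (b : α) (z : List α) : Prop := ∀ c ∈ z.getLast?, b < c

lemma Qb_nil (b : α) : Qb b ([] : List α) := by intro c hc; simp at hc

lemma Qb_vstar {b : α} {z : List α} (h : Qb b z) : Qb b (vstar z) := by
  by_cases hz : z = []
  · subst hz; simpa using h
  · obtain ⟨c, hc, hcase⟩ := last_vstar_cases hz
    have hbc : b < c := h c (by rwa [Option.mem_def])
    rcases hcase with h1 | ⟨-, h2⟩
    · intro d hd
      rw [Option.mem_def, h1, Option.some_inj] at hd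
      subst hd; exact hbc
    · intro d hd
      exact lt_trans hbc (h2 d hd)

lemma Ra_vstar {a : α} {z : List α} (h : List.IsChain (· ≤ ·) (a :: z)) :
    List.IsChain (· ≤ ·) (a :: vstar z) := by
  have hz : List.IsChain (· ≤ ·) z := (List.isChain_cons.1 h).2
  rw [chain'_vstar hz]
  cases z with
  | nil => simpa using h
  | cons hd t =>
    simp only [List.tail_cons]
    cases t with
    | nil => simp
    | cons h2 t2 =>
      have ha : a ≤ hd := (List.isChain_cons_cons.1 h).1
      have hh : hd ≤ h2 := (List.isChain_cons_cons.1 hz).1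
      exact List.isChain_cons_cons.2 ⟨le_trans ha hh, (List.isChain_cons_cons.1 hz).2⟩

lemma pred_down (Pp : List α → Prop) (hst : ∀ z, Pp z → Pp (vstar z)) (w : List α) :
    ∀ i, i ≤ w.length → Pp (gfun w i) → ∀ j, j ≤ i → Pp (gfun w j) := by
  intro i
  induction i with
  | zero =>
    intro _ h j hj
    have : j = 0 := by omega
    rwa [this]
  | succ i ih =>
    intro hi h j hj
    have hstep : Pp (gfun w i) := by
      rw [← vstar_gfun w hi]
      exact hst _ h
    rcases Nat.lt_or_ge j (i+1) with hh | hh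
    · exact ih (by omega) hstep j (by omega)
    · have : j = i + 1 := by omega
      rwa [this]

/-! ### thresholds -/

open Classical in
noncomputable def kappa (w : List α) (b : α) : ℕ :=
  Nat.findGreatest (fun m => Qb b (gfun w m)) w.length

open Classical in
noncomputable def mu (w : List α) (a : α) : ℕ :=
  Nat.findGreatest (fun m => List.IsChain (· ≤ ·) (a :: gfun w m)) w.length

lemma kappa_le (w : List α) (b : α) : kappa w b ≤ w.length := by
  classical exact Nat.findGreatest_le _

lemma mu_le (w : List α) (a : α) : mu w a ≤ w.length := by
  classical exact Nat.findGreatest_le _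

lemma Qb_of_le_kappa {w : List α} {b : α} {m : ℕ} (hm : m ≤ kappa w b) :
    Qb b (gfun w m) := by
  classical
  have h0 : Qb b (gfun w 0) := by rw [gfun_zero]; exact Qb_nil b
  have hspec : Qb b (gfun w (kappa w b)) := by
    unfold kappa
    exact Nat.findGreatest_spec (P := fun m => Qb b (gfun w m)) (Nat.zero_le _) h0
  exact pred_down (fun z => Qb b z) (fun z => Qb_vstar) w (kappa w b)
    (kappa_le w b) hspec m hm

lemma not_Qb_of_gt_kappa {w : List α} {b : α} {m : ℕ} (h1 : kappa w b < m)
    (h2 : m ≤ w.length) : ¬ Qb b (gfun w m) := by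
  classical exact Nat.findGreatest_is_greatest h1 h2

lemma le_kappa_of_Qb {w : List α} {b : α} {m : ℕ} (h1 : m ≤ w.length)
    (h2 : Qb b (gfun w m)) : m ≤ kappa w b := by
  classical exact Nat.le_findGreatest h1 h2

lemma Ra_of_le_mu {w : List α} {a : α} {m : ℕ} (hm : m ≤ mu w a) :
    List.IsChain (· ≤ ·) (a :: gfun w m) := by
  classical
  have h0 : List.IsChain (· ≤ ·) (a :: gfun w 0) := by
    rw [gfun_zero]; exact List.isChain_singleton a
  have hspec : List.IsChain (· ≤ ·) (a :: gfun w (mu w a)) := by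
    unfold mu
    exact Nat.findGreatest_spec (P := fun m => List.IsChain (· ≤ ·) (a :: gfun w m))
      (Nat.zero_le w.length) h0
  exact pred_down (fun z => List.IsChain (· ≤ ·) (a :: z)) (fun z => Ra_vstar) w (mu w a)
    (mu_le w a) hspec m hm

lemma not_Ra_of_gt_mu {w : List α} {a : α} {m : ℕ} (h1 : mu w a < m)
    (h2 : m ≤ w.length) : ¬ List.IsChain (· ≤ ·) (a :: gfun w m) := by
  classical exact Nat.findGreatest_is_greatest h1 h2

lemma le_mu_of_Ra {w : List α} {a : α} {m : ℕ} (h1 : m ≤ w.length)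
    (h2 : List.IsChain (· ≤ ·) (a :: gfun w m)) : m ≤ mu w a := by
  classical exact Nat.le_findGreatest h1 h2

/-! ### path formulas -/

lemma gfun_append_singleton (w : List α) (b : α) :
    ∀ m, m ≤ w.length + 1 →
      gfun (w ++ [b]) m = if m ≤ kappa w b then gfun w m else gfun w (m-1) ++ [b] := by
  have hlen : (w ++ [b]).length = w.length + 1 := by simp
  suffices h : ∀ d m, m + d = w.length + 1 →
      gfun (w ++ [b]) m = if m ≤ kappa w b then gfun w m else gfun w (m-1) ++ [b] by
    intro m hm
    exact h (w.length + 1 - m) m (by omega)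
  intro d
  induction d with
  | zero =>
    intro m hm
    simp only [Nat.add_zero] at hm
    subst hm
    rw [if_neg (by have := kappa_le w b; omega)]
    have h1 : gfun (w ++ [b]) (w.length + 1) = w ++ [b] := by
      rw [← hlen, gfun_top]
    rw [h1]
    simp
  | succ d ih =>
    intro m hm
    have hm1 : m + 1 + d = w.length + 1 := by omega
    have hmw : m ≤ w.length := by omega
    have hstep : vstar (gfun (w ++ [b]) (m + 1)) = gfun (w ++ [b]) m :=
      vstar_gfun _ (by rw [hlen]; omega)
    rw [← hstep, ih (m+1) hm1]
    by_cases hk : m + 1 ≤ kappa w b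
    · rw [if_pos hk, if_pos (by omega), vstar_gfun w (by have := kappa_le w b; omega)]
    · rw [if_neg hk]
      simp only [Nat.add_sub_cancel]
      by_cases hq : Qb b (gfun w m)
      · rw [if_pos (le_kappa_of_Qb hmw hq)]
        by_cases hz : gfun w m = []
        · rw [hz]; simp
        · have hc' : (gfun w m).getLast? = some ((gfun w m).getLast hz) :=
            List.getLast?_eq_getLast hz
          exact ss_gt hc' (hq _ (by rw [Option.mem_def, hc']))
      · rw [if_neg (fun hle => hq (Qb_of_le_kappa hle))]
        have hm0 : m ≠ 0 := by
          rintro rfl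
          exact hq (by rw [gfun_zero]; exact Qb_nil b)
        have hz : gfun w m ≠ [] := by
          intro hzz
          exact hq (by rw [hzz]; exact Qb_nil b)
        rw [Qb] at hq
        push_neg at hq
        obtain ⟨c, hc, hcb⟩ := hq
        rw [ss_le (Option.mem_def.1 hc) hcb]
        have : vstar (gfun w m) = gfun w (m - 1) := by
          have e : m = (m - 1) + 1 := by omega
          rw [e] at hmw ⊢
          exact vstar_gfun w hmw
        rw [this]

lemma gfun_cons (w : List α) (a : α) :
    ∀ m, m ≤ w.length + 1 →
      gfun (a :: w) m = if m ≤ mu w a then gfun w m else a :: gfun w (m-1) := by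
  have hlen : (a :: w).length = w.length + 1 := by simp
  suffices h : ∀ d m, m + d = w.length + 1 →
      gfun (a :: w) m = if m ≤ mu w a then gfun w m else a :: gfun w (m-1) by
    intro m hm
    exact h (w.length + 1 - m) m (by omega)
  intro d
  induction d with
  | zero =>
    intro m hm
    simp only [Nat.add_zero] at hm
    subst hm
    rw [if_neg (by have := mu_le w a; omega)]
    have h1 : gfun (a :: w) (w.length + 1) = a :: w := by
      rw [← hlen, gfun_top]
    rw [h1]
    simp
  | succ d ih =>
    intro m hm
    have hm1 : m + 1 + d = w.length + 1 := by omega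
    have hmw : m ≤ w.length := by omega
    have hstep : vstar (gfun (a :: w) (m + 1)) = gfun (a :: w) m :=
      vstar_gfun _ (by rw [hlen]; omega)
    rw [← hstep, ih (m+1) hm1]
    by_cases hk : m + 1 ≤ mu w a
    · rw [if_pos hk, if_pos (by omega), vstar_gfun w (by have := mu_le w a; omega)]
    · rw [if_neg hk]
      simp only [Nat.add_sub_cancel]
      have hunf : vstar (a :: gfun w m) = if List.IsChain (· ≤ ·) (a :: gfun w m)
          then gfun w m else a :: vstar (gfun w m) := rfl
      rw [hunf]
      by_cases hq : List.IsChain (· ≤ ·) (a :: gfun w m)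
      · rw [if_pos hq, if_pos (le_mu_of_Ra hmw hq)]
      · rw [if_neg hq, if_neg (fun hle => hq (Ra_of_le_mu hle))]
        have hm0 : m ≠ 0 := by
          rintro rfl
          exact hq (by rw [gfun_zero]; exact List.isChain_singleton a)
        have : vstar (gfun w m) = gfun w (m - 1) := by
          have e : m = (m - 1) + 1 := by omega
          rw [e] at hmw ⊢
          exact vstar_gfun w hmw
        rw [this]

/-! ### V-order and its characterization -/


def VC (x y : List α) : Prop :=
  ((∀ m, m ≤ min x.length y.length → gfun x m = gfun y m) ∧ x.length < y.length) ∨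
  (∃ m, m ≤ min x.length y.length ∧ (∀ m', m' < m → gfun x m' = gfun y m') ∧
    clt (gfun x m) (gfun y m))

lemma vc_asymm {x y : List α} (h1 : VC x y) (h2 : VC y x) : False := by
  rcases h1 with ⟨ha1, hl1⟩ | ⟨m, hm, hag, hclt⟩
  · rcases h2 with ⟨ha2, hl2⟩ | ⟨m, hm, hag, hclt⟩
    · omega
    · have := ha1 m (by omega)
      rw [this] at hclt
      exact clt_irrefl _ hclt
  · rcases h2 with ⟨ha2, hl2⟩ | ⟨m', hm', hag', hclt'⟩
    · have := ha2 m (by omega)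
      rw [this] at hclt
      exact clt_irrefl _ hclt
    · rcases lt_trichotomy m m' with h | rfl | h
      · rw [hag' m h] at hclt
        exact clt_irrefl _ hclt
      · exact clt_asymm hclt hclt'
      · rw [hag m' h] at hclt'
        exact clt_irrefl _ hclt'

lemma vc_total {x y : List α} (hxy : x ≠ y) : VC x y ∨ VC y x := by
  classical
  by_cases hex : ∃ m, m ≤ min x.length y.length ∧ gfun x m ≠ gfun y m
  · set P : ℕ → Prop := fun m => m ≤ min x.length y.length ∧ gfun x m ≠ gfun y m with hP
    have hfind := Nat.find_spec hex
    have hle : Nat.find hex ≤ min x.length y.length := hfind.1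
    have hne : gfun x (Nat.find hex) ≠ gfun y (Nat.find hex) := hfind.2
    have hagree : ∀ m', m' < Nat.find hex → gfun x m' = gfun y m' := by
      intro m' hm'
      have := Nat.find_min hex hm'
      push_neg at this
      exact this (by omega)
    have hlen : (gfun x (Nat.find hex)).length = (gfun y (Nat.find hex)).length := by
      rw [length_gfun x (by omega), length_gfun y (by omega)]
    rcases clt_total hlen hne with h | h
    · exact Or.inl (Or.inr ⟨Nat.find hex, hle, hagree, h⟩)
    · refine Or.inr (Or.inr ⟨Nat.find hex, by omega, fun m' hm' => (hagree m' hm').symm, h⟩)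
  · push_neg at hex
    rcases lt_trichotomy x.length y.length with h | h | h
    · exact Or.inl (Or.inl ⟨hex, h⟩)
    · exfalso
      apply hxy
      have h1 := hex x.length (by omega)
      rwa [gfun_top, show x.length = y.length from h, gfun_top] at h1
    · refine Or.inr (Or.inl ⟨fun m hm => (hex m (by omega)).symm, h⟩)

lemma jclause_iff_clt : ∀ (A B : List α), A.length = B.length →
    ((∃ j : ℕ, j < A.length ∧ (∀ j' : ℕ, j < j' → A[j']? = B[j']?) ∧
      ∃ a b : α, A[j]? = some a ∧ B[j]? = some b ∧ a < b) ↔ clt A B) := by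
  intro A
  induction A with
  | nil =>
    intro B h
    have : B = [] := by
      cases B with
      | nil => rfl
      | cons b B => simp at h
    subst this
    simp
  | cons a A ih =>
    intro B h
    cases B with
    | nil => simp at h
    | cons b B =>
      simp only [List.length_cons, Nat.succ_inj] at h
      rw [clt_cons_iff]
      constructor
      · rintro ⟨j, hj, hup, a', b', ha', hb', hab⟩
        cases j with
        | zero =>
          have hAB : A = B := by
            apply List.ext_getElem?
            intro n
            have := hup (n+1) (by omega)
            simpa using this
          simp only [List.getElem?_cons_zero, Option.some_inj] at ha' hb'
          exact Or.inr ⟨hAB, by rw [ha', hb']; exact hab⟩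
        | succ j =>
          refine Or.inl ((ih B h).1 ⟨j, by simpa using hj, ?_, a', b', by simpa using ha',
            by simpa using hb', hab⟩)
          intro j' hj'
          have := hup (j'+1) (by omega)
          simpa using this
      · rintro (hclt | ⟨rfl, hab⟩)
        · obtain ⟨j, hj, hup, a', b', ha', hb', hab⟩ := (ih B h).2 hclt
          refine ⟨j+1, by simpa using hj, ?_, a', b', by simpa using ha',
            by simpa using hb', hab⟩
          intro j' hj'
          cases j' with
          | zero => omega
          | succ j'' => simpa using hup j'' (by omega)
        · refine ⟨0, by simp, ?_, a, b, by simp, by simp, hab⟩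
          intro j' hj'
          cases j' with
          | zero => omega
          | succ j'' => simp

lemma path_mem_iff {x y : List α} :
    (∃ k : ℕ, vstar^[k] y = x) ↔
      (x.length ≤ y.length ∧ ∀ m, m ≤ x.length → gfun x m = gfun y m) := by
  constructor
  · rintro ⟨k, rfl⟩
    have hlx : (vstar^[k] y).length = y.length - k := length_vstar_iterate y k
    have hgy : vstar^[k] y = gfun y (y.length - k) := gfun_iterate y k
    constructor
    · omega
    · intro m hm
      rw [hgy]
      exact gfun_gfun y (by omega) (by omega)
  · rintro ⟨hl, hag⟩
    refine ⟨y.length - x.length, ?_⟩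
    rw [gfun_iterate, show y.length - (y.length - x.length) = x.length by omega,
      ← hag x.length le_rfl, gfun_top]

lemma clause1_iff {x y : List α} (hxy : x ≠ y) :
    (∃ k : ℕ, 0 < k ∧ vstar^[k] y = x) ↔
      ((∀ m, m ≤ min x.length y.length → gfun x m = gfun y m) ∧
        x.length < y.length) := by
  constructor
  · rintro ⟨k, hk, he⟩
    have h := path_mem_iff.1 ⟨k, he⟩
    have hlt : x.length < y.length := by
      rcases Nat.lt_or_ge x.length y.length with h' | h'
      · exact h'
      · exfalso
        apply hxy
        have h1 := h.2 x.length le_rfl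
        have : x.length = y.length := by omega
        rwa [gfun_top, this, gfun_top] at h1
    exact ⟨fun m hm => h.2 m (by omega), hlt⟩
  · rintro ⟨hag, hlt⟩
    refine ⟨y.length - x.length, by omega, ?_⟩
    rw [gfun_iterate, show y.length - (y.length - x.length) = x.length by omega,
      ← hag x.length (by omega), gfun_top]

/-- the merge-level bound: any common value of the iterated paths has level below
any disagreement level -/
lemma merge_level_bound {x y : List α} {m s t : ℕ}
    (hm : m ≤ min x.length y.length) (hne : gfun x m ≠ gfun y m)
    (heq : vstar^[s + 1] x = vstar^[t + 1] y) :
    x.length - m ≤ s ∧ y.length - m ≤ t := by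
  have hlz : (vstar^[s+1] x).length = x.length - (s+1) := length_vstar_iterate x (s+1)
  have hlz2 : (vstar^[t+1] y).length = y.length - (t+1) := length_vstar_iterate y (t+1)
  have hzx : vstar^[s+1] x = gfun x (x.length - (s+1)) := gfun_iterate x (s+1)
  have hzy : vstar^[t+1] y = gfun y (y.length - (t+1)) := gfun_iterate y (t+1)
  have hll : x.length - (s+1) = y.length - (t+1) := by rw [← hlz, ← hlz2, heq]
  have hμ : x.length - (s+1) < m := by
    by_contra hge
    push_neg at hge
    apply hne
    calc gfun x m = gfun (gfun x (x.length - (s+1))) m :=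
          (gfun_gfun x hge (by omega)).symm
      _ = gfun (vstar^[s+1] x) m := by rw [hzx]
      _ = gfun (vstar^[t+1] y) m := by rw [heq]
      _ = gfun (gfun y (y.length - (t+1))) m := by rw [hzy]
      _ = gfun y m := gfun_gfun y (by omega) (by omega)
  omega

theorem vless_iff_vc {x y : List α} (hxy : x ≠ y) : VLess x y ↔ VC x y := by
  classical
  constructor
  · rintro (h1 | ⟨hnxy, hnyx, s, t, heq, hmin, hj⟩)
    · exact Or.inl ((clause1_iff hxy).1 h1)
    · right
      have hex : ∃ m, m ≤ min x.length y.length ∧ gfun x m ≠ gfun y m := by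
        by_contra hc
        push_neg at hc
        rcases le_total x.length y.length with hle | hle
        · exact hnxy (path_mem_iff.2 ⟨hle, fun m hm => hc m (by omega)⟩)
        · exact hnyx (path_mem_iff.2 ⟨hle, fun m hm => (hc m (by omega)).symm⟩)
      set m₀ := Nat.find hex with hm₀
      have hfind : m₀ ≤ min x.length y.length ∧ gfun x m₀ ≠ gfun y m₀ := Nat.find_spec hex
      have hagree : ∀ m', m' < m₀ → gfun x m' = gfun y m' := by
        intro m' hm'
        have := Nat.find_min hex hm'
        push_neg at this
        exact this (by omega)
      have hm₀pos : 1 ≤ m₀ := by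
        rcases Nat.eq_zero_or_pos m₀ with h0 | h0
        · exfalso; apply hfind.2; rw [h0, gfun_zero, gfun_zero]
        · omega
      -- equality holds at the canonical pair
      have heq₀ : vstar^[(x.length - m₀) + 1] x = vstar^[(y.length - m₀) + 1] y := by
        rw [gfun_iterate, gfun_iterate,
          show x.length - (x.length - m₀ + 1) = m₀ - 1 by omega,
          show y.length - (y.length - m₀ + 1) = m₀ - 1 by omega]
        exact hagree (m₀ - 1) (by omega)
      have hst : s = x.length - m₀ ∧ t = y.length - m₀ := by
        have h1 := hmin _ _ heq₀
        have h2 := merge_level_bound hfind.1 hfind.2 heq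
        omega
      obtain ⟨rfl, rfl⟩ := hst
      refine ⟨m₀, hfind.1, hagree, ?_⟩
      have hx' : vstar^[x.length - m₀] x = gfun x m₀ := by
        rw [gfun_iterate, show x.length - (x.length - m₀) = m₀ by omega]
      have hy' : vstar^[y.length - m₀] y = gfun y m₀ := by
        rw [gfun_iterate, show y.length - (y.length - m₀) = m₀ by omega]
      rw [hx', hy'] at hj
      exact (jclause_iff_clt _ _ (by rw [length_gfun x (by omega), length_gfun y (by omega)])).1 hj
  · rintro (⟨hag, hlt⟩ | ⟨m, hm, hagree, hclt⟩)
    · exact Or.inl ((clause1_iff hxy).2 ⟨hag, hlt⟩)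
    · right
      have hne : gfun x m ≠ gfun y m := clt_ne hclt
      have hmpos : 1 ≤ m := by
        rcases Nat.eq_zero_or_pos m with h0 | h0
        · exfalso; apply hne; rw [h0, gfun_zero, gfun_zero]
        · omega
      refine ⟨?_, ?_, x.length - m, y.length - m, ?_, ?_, ?_⟩
      · rintro hmem
        obtain ⟨hle, hagall⟩ := path_mem_iff.1 hmem
        exact hne (hagall m (by omega))
      · rintro hmem
        obtain ⟨hle, hagall⟩ := path_mem_iff.1 hmem
        exact hne ((hagall m (by omega)).symm)
      · rw [gfun_iterate, gfun_iterate,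
          show x.length - (x.length - m + 1) = m - 1 by omega,
          show y.length - (y.length - m + 1) = m - 1 by omega]
        exact hagree (m - 1) (by omega)
      · intro s' t' heq'
        exact merge_level_bound hm hne heq'
      · have hx' : vstar^[x.length - m] x = gfun x m := by
          rw [gfun_iterate, show x.length - (x.length - m) = m by omega]
        have hy' : vstar^[y.length - m] y = gfun y m := by
          rw [gfun_iterate, show y.length - (y.length - m) = m by omega]
        rw [hx', hy']
        exact (jclause_iff_clt _ _
          (by rw [length_gfun x (by omega), length_gfun y (by omega)])).2 hclt

/-! ### crux lemmas packaged -/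

lemma cruxS_gt {b : α} {z : List α} (hz : z ≠ []) (hQ : ∀ c ∈ z.getLast?, b < c) :
    clt (vstar z ++ [b]) z := by
  obtain ⟨p, c, q, h1, h2, hc, hp⟩ := vstar_decomp z hz
  rw [h2, h1, List.append_assoc, clt_append_left_iff]
  apply cltS_gt q c hc
  intro d hd
  apply hQ
  rw [h1, List.getLast?_append_cons]
  exact hd

lemma clt_of_vstar_eq_last_lt {z1 z2 : List α} (hz1 : z1 ≠ []) (hz2 : z2 ≠ [])
    (hv : vstar z1 = vstar z2) {c1 c2 : α} (h1 : z1.getLast? = some c1)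
    (h2 : z2.getLast? = some c2) (hlt : c2 < c1) : clt z2 z1 := by
  obtain ⟨d1, hd1, hcase1⟩ := last_vstar_cases hz1
  obtain ⟨d2, hd2, hcase2⟩ := last_vstar_cases hz2
  rw [h1, Option.some_inj] at hd1
  rw [h2, Option.some_inj] at hd2
  subst hd1; subst hd2
  rcases hcase1 with hv1 | ⟨he1, hgt1⟩
  · rcases hcase2 with hv2 | ⟨he2, hgt2⟩
    · rw [hv, hv2, Option.some_inj] at hv1
      rw [hv1] at hlt
      exact absurd hlt (lt_irrefl _)
    · -- z2 = vstar z2 ++ [c2], while z1 has an interior deletion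
      obtain ⟨p, c, q, hp1, hp2, hc, hp⟩ := vstar_decomp z1 hz1
      have hlastq : (c :: q).getLast? = some c1 := by
        rw [← List.getLast?_append_cons p c q, ← hp1, h1]
      have hqne : q ≠ [] := by
        rintro rfl
        simp only [List.getLast?_singleton, Option.some_inj] at hlastq
        subst hlastq
        have hvp : vstar z1 = p := by rw [hp2]; simp
        rw [hvp] at hv1
        have := hp c (by rwa [Option.mem_def])
        exact absurd this (lt_irrefl _)
      rw [he2, ← hv, hp2, hp1, List.append_assoc, clt_append_left_iff]
      apply cltS_gt q c hc
      intro d hd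
      rw [Option.mem_def, hlastq, Option.some_inj] at hd
      subst hd
      exact hlt
  · rcases hcase2 with hv2 | ⟨he2, hgt2⟩
    · rw [← hv] at hv2
      have := hgt1 c2 (by rwa [Option.mem_def])
      exact absurd hlt (not_lt.2 (le_of_lt this))
    · rw [he2, he1, ← hv, clt_append_left_iff]
      exact Or.inr ⟨rfl, hlt⟩

/-! ### the suffix step -/

theorem vc_suffix (b : α) {x y : List α} (h : VC x y) :
    VC (x ++ [b]) (y ++ [b]) := by
  have hlx : (x ++ [b]).length = x.length + 1 := by simp
  have hly : (y ++ [b]).length = y.length + 1 := by simp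
  have gX := gfun_append_singleton x b
  have gY := gfun_append_singleton y b
  have hkxl := kappa_le x b
  have hkyl := kappa_le y b
  rcases h with ⟨hag, hlt⟩ | ⟨m, hm, hagree, hclt⟩
  · -- ancestor case
    by_cases hky : kappa y b ≤ x.length
    · -- 1a : thresholds agree
      have hkx : kappa x b = kappa y b := by
        apply le_antisymm
        · by_contra hgt
          push_neg at hgt
          refine not_Qb_of_gt_kappa (w := y) hgt (by omega) ?_
          rw [← hag (kappa x b) (by omega)]
          exact Qb_of_le_kappa le_rfl
        · refine le_kappa_of_Qb (by omega) ?_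
          rw [hag (kappa y b) (by omega)]
          exact Qb_of_le_kappa le_rfl
      left
      constructor
      · intro m hm
        rw [hlx, hly] at hm
        rw [gX m (by omega), gY m (by omega), hkx]
        by_cases hmk : m ≤ kappa y b
        · rw [if_pos hmk, if_pos hmk]
          exact hag m (by omega)
        · rw [if_neg hmk, if_neg hmk, hag (m-1) (by omega)]
      · omega
    · -- 1b : kappa y b ≥ x.length + 1
      push_neg at hky
      have hkx : kappa x b = x.length := by
        refine le_antisymm hkxl (le_kappa_of_Qb le_rfl ?_)
        rw [hag x.length (by omega)]
        exact Qb_of_le_kappa (by omega)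
      right
      refine ⟨x.length + 1, by rw [hlx, hly]; omega, ?_, ?_⟩
      · intro m' hm'
        rw [gX m' (by omega), gY m' (by omega), if_pos (by omega), if_pos (by omega)]
        exact hag m' (by omega)
      · have e1 : gfun (x ++ [b]) (x.length + 1) = x ++ [b] := by
          rw [← hlx, gfun_top]
        have e2 : gfun (y ++ [b]) (x.length + 1) = gfun y (x.length + 1) := by
          rw [gY (x.length + 1) (by omega), if_pos (by omega)]
        have hzlen : (gfun y (x.length + 1)).length = x.length + 1 :=
          length_gfun y (by omega)
        have hzne : gfun y (x.length + 1) ≠ [] := by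
          intro hcon
          rw [hcon] at hzlen
          simp at hzlen
        have hvz : vstar (gfun y (x.length + 1)) = x := by
          rw [vstar_gfun y (by omega), ← hag x.length (by omega), gfun_top]
        rw [e1, e2]
        have hgoal := cruxS_gt hzne
          (Qb_of_le_kappa (show x.length + 1 ≤ kappa y b by omega))
        rwa [hvz] at hgoal
  · -- comparison case
    have hne : gfun x m ≠ gfun y m := clt_ne hclt
    have hmpos : 1 ≤ m := by
      rcases Nat.eq_zero_or_pos m with h0 | h0
      · exfalso; apply hne; rw [h0, gfun_zero, gfun_zero]
      · omega
    by_cases hkxm : m ≤ kappa x b <;> by_cases hkym : m ≤ kappa y b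
    · -- 2a
      right
      refine ⟨m, by rw [hlx, hly]; omega, ?_, ?_⟩
      · intro m' hm'
        rw [gX m' (by omega), gY m' (by omega), if_pos (by omega), if_pos (by omega)]
        exact hagree m' hm'
      · rw [gX m (by omega), gY m (by omega), if_pos hkxm, if_pos hkym]
        exact hclt
    · -- 2c : impossible
      exfalso
      have hz1ne : gfun x m ≠ [] := by
        intro hcon
        have := length_gfun x (show m ≤ x.length by omega)
        rw [hcon] at this; simp at this; omega
      have hz2ne : gfun y m ≠ [] := by
        intro hcon
        have := length_gfun y (show m ≤ y.length by omega)
        rw [hcon] at this; simp at this; omega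
      have hQ1 : Qb b (gfun x m) := Qb_of_le_kappa hkxm
      have hQ2 : ¬ Qb b (gfun y m) := not_Qb_of_gt_kappa (by omega) (by omega)
      rw [Qb] at hQ2
      push_neg at hQ2
      obtain ⟨c2, hc2, hc2b⟩ := hQ2
      have hc1' : (gfun x m).getLast? = some ((gfun x m).getLast hz1ne) :=
        List.getLast?_eq_getLast hz1ne
      have hb1 : b < (gfun x m).getLast hz1ne := hQ1 _ (by rw [Option.mem_def, hc1'])
      have hv : vstar (gfun x m) = vstar (gfun y m) := by
        rw [show m = (m-1)+1 by omega, vstar_gfun x (by omega), vstar_gfun y (by omega)]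
        exact hagree (m-1) (by omega)
      have := clt_of_vstar_eq_last_lt hz1ne hz2ne hv hc1' (Option.mem_def.1 hc2)
        (lt_of_le_of_lt hc2b hb1)
      exact clt_asymm hclt this
    · -- 2d
      have hkx' : kappa x b = m - 1 := by
        apply le_antisymm (by omega)
        refine le_kappa_of_Qb (by omega) ?_
        rw [hagree (m-1) (by omega)]
        exact Qb_of_le_kappa (by omega)
      right
      refine ⟨m, by rw [hlx, hly]; omega, ?_, ?_⟩
      · intro m' hm'
        rw [gX m' (by omega), gY m' (by omega), if_pos (by omega), if_pos (by omega)]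
        exact hagree m' hm'
      · rw [gX m (by omega), gY m (by omega), if_neg (by omega), if_pos hkym]
        have hzne : gfun y m ≠ [] := by
          intro hcon
          have := length_gfun y (show m ≤ y.length by omega)
          rw [hcon] at this; simp at this; omega
        have hvz : vstar (gfun y m) = gfun x (m - 1) := by
          rw [show m = (m-1)+1 by omega, vstar_gfun y (by omega)]
          exact (hagree (m-1) (by omega)).symm
        rw [← hvz]
        exact cruxS_gt hzne (Qb_of_le_kappa hkym)
    · -- 2b
      have hkk : kappa x b = kappa y b := by
        apply le_antisymm
        · refine le_kappa_of_Qb (by omega) ?_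
          rw [← hagree (kappa x b) (by omega)]
          exact Qb_of_le_kappa le_rfl
        · refine le_kappa_of_Qb (by omega) ?_
          rw [hagree (kappa y b) (by omega)]
          exact Qb_of_le_kappa le_rfl
      right
      refine ⟨m + 1, by rw [hlx, hly]; omega, ?_, ?_⟩
      · intro m' hm'
        rw [gX m' (by omega), gY m' (by omega), hkk]
        by_cases hmk : m' ≤ kappa y b
        · rw [if_pos hmk, if_pos hmk]
          exact hagree m' (by omega)
        · rw [if_neg hmk, if_neg hmk, hagree (m'-1) (by omega)]
      · rw [gX (m+1) (by omega), gY (m+1) (by omega), if_neg (by omega), if_neg (by omega)]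
        simp only [Nat.add_sub_cancel]
        exact (clt_append_singleton_iff b _ _).2 hclt

/-! ### the prefix step -/

theorem vc_prefix (a : α) {x y : List α} (h : VC x y) :
    VC (a :: x) (a :: y) := by
  have hlx : (a :: x).length = x.length + 1 := by simp
  have hly : (a :: y).length = y.length + 1 := by simp
  have gX := gfun_cons x a
  have gY := gfun_cons y a
  have hkxl := mu_le x a
  have hkyl := mu_le y a
  rcases h with ⟨hag, hlt⟩ | ⟨m, hm, hagree, hclt⟩
  · -- ancestor case
    by_cases hky : mu y a ≤ x.length
    · -- 1a
      have hkx : mu x a = mu y a := by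
        apply le_antisymm
        · by_contra hgt
          push_neg at hgt
          refine not_Ra_of_gt_mu (w := y) hgt (by omega) ?_
          rw [← hag (mu x a) (by omega)]
          exact Ra_of_le_mu le_rfl
        · refine le_mu_of_Ra (by omega) ?_
          rw [hag (mu y a) (by omega)]
          exact Ra_of_le_mu le_rfl
      left
      constructor
      · intro m hm
        rw [hlx, hly] at hm
        rw [gX m (by omega), gY m (by omega), hkx]
        by_cases hmk : m ≤ mu y a
        · rw [if_pos hmk, if_pos hmk]
          exact hag m (by omega)
        · rw [if_neg hmk, if_neg hmk, hag (m-1) (by omega)]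
      · omega
    · -- 1b
      push_neg at hky
      have hkx : mu x a = x.length := by
        refine le_antisymm hkxl (le_mu_of_Ra le_rfl ?_)
        rw [hag x.length (by omega)]
        exact Ra_of_le_mu (by omega)
      have e1 : gfun (a :: x) (x.length + 1) = a :: x := by
        rw [← hlx, gfun_top]
      have e2 : gfun (a :: y) (x.length + 1) = gfun y (x.length + 1) := by
        rw [gY (x.length + 1) (by omega), if_pos (by omega)]
      have hzlen : (gfun y (x.length + 1)).length = x.length + 1 :=
        length_gfun y (by omega)
      have hRz : List.IsChain (· ≤ ·) (a :: gfun y (x.length + 1)) :=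
        Ra_of_le_mu (show x.length + 1 ≤ mu y a by omega)
      have hvz : vstar (gfun y (x.length + 1)) = x := by
        rw [vstar_gfun y (by omega), ← hag x.length (by omega), gfun_top]
      have hchz : List.IsChain (· ≤ ·) (gfun y (x.length + 1)) :=
        (List.isChain_cons.1 hRz).2
      have htl : (gfun y (x.length + 1)).tail = x := by
        rw [← chain'_vstar hchz, hvz]
      obtain ⟨h0, t, hz⟩ : ∃ h0 t, gfun y (x.length + 1) = h0 :: t := by
        cases hzc : gfun y (x.length + 1) with
        | nil => rw [hzc] at hzlen; simp at hzlen
        | cons h0 t => exact ⟨h0, t, rfl⟩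
      have htx : t = x := by rw [hz] at htl; simpa using htl
      rw [htx] at hz
      have hah0 : a ≤ h0 := by
        have := (List.isChain_cons.1 hRz).1
        rw [hz] at this
        exact this h0 (by simp)
      rcases eq_or_lt_of_le hah0 with heq0 | hlt0
      · -- equal: ancestor
        left
        constructor
        · intro m hm
          rw [hlx, hly] at hm
          rcases Nat.lt_or_ge m (x.length + 1) with hm' | hm'
          · rw [gX m (by omega), gY m (by omega), if_pos (by omega), if_pos (by omega)]
            exact hag m (by omega)
          · have : m = x.length + 1 := by omega
            rw [this, e1, e2, hz, heq0]
        · omega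
      · -- strictly below: comparison at level |x|+1
        right
        refine ⟨x.length + 1, by rw [hlx, hly]; omega, ?_, ?_⟩
        · intro m' hm'
          rw [gX m' (by omega), gY m' (by omega), if_pos (by omega), if_pos (by omega)]
          exact hag m' (by omega)
        · rw [e1, e2, hz]
          exact Or.inr ⟨rfl, hlt0⟩
  · -- comparison case
    have hne : gfun x m ≠ gfun y m := clt_ne hclt
    have hmpos : 1 ≤ m := by
      rcases Nat.eq_zero_or_pos m with h0 | h0
      · exfalso; apply hne; rw [h0, gfun_zero, gfun_zero]
      · omega
    by_cases hkxm : m ≤ mu x a <;> by_cases hkym : m ≤ mu y a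
    · -- 2a
      right
      refine ⟨m, by rw [hlx, hly]; omega, ?_, ?_⟩
      · intro m' hm'
        rw [gX m' (by omega), gY m' (by omega), if_pos (by omega), if_pos (by omega)]
        exact hagree m' hm'
      · rw [gX m (by omega), gY m (by omega), if_pos hkxm, if_pos hkym]
        exact hclt
    · -- 2c : x side still chain-compatible, y side not
      have hky' : mu y a = m - 1 := by
        apply le_antisymm (by omega)
        refine le_mu_of_Ra (by omega) ?_
        rw [← hagree (m-1) (by omega)]
        exact Ra_of_le_mu (by omega)
      right
      refine ⟨m, by rw [hlx, hly]; omega, ?_, ?_⟩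
      · intro m' hm'
        rw [gX m' (by omega), gY m' (by omega), if_pos (by omega), if_pos (by omega)]
        exact hagree m' hm'
      · rw [gX m (by omega), gY m (by omega), if_pos hkxm, if_neg (by omega)]
        have hnR : ¬ List.IsChain (· ≤ ·) (a :: gfun y m) :=
          not_Ra_of_gt_mu (by omega) (by omega)
        have hstep := cruxP hnR
        have hvz : vstar (gfun y m) = gfun y (m - 1) := by
          conv_lhs => rw [show m = (m-1)+1 by omega]
          exact vstar_gfun y (by omega)
        rw [hvz] at hstep
        exact clt_trans hclt hstep
    · -- 2d
      have hkx' : mu x a = m - 1 := by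
        apply le_antisymm (by omega)
        refine le_mu_of_Ra (by omega) ?_
        rw [hagree (m-1) (by omega)]
        exact Ra_of_le_mu (by omega)
      have hRz : List.IsChain (· ≤ ·) (a :: gfun y m) := Ra_of_le_mu hkym
      have hchz : List.IsChain (· ≤ ·) (gfun y m) := (List.isChain_cons.1 hRz).2
      have hzlen : (gfun y m).length = m := length_gfun y (by omega)
      obtain ⟨h0, t, hz⟩ : ∃ h0 t, gfun y m = h0 :: t := by
        cases hzc : gfun y m with
        | nil => rw [hzc] at hzlen; simp at hzlen; omega
        | cons h0 t => exact ⟨h0, t, rfl⟩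
      have htl : t = gfun x (m - 1) := by
        have h1 : vstar (gfun y m) = gfun y (m - 1) := by
          conv_lhs => rw [show m = (m-1)+1 by omega]
          exact vstar_gfun y (by omega)
        have h2 := chain'_vstar hchz
        rw [h1, hz] at h2
        simp only [List.tail_cons] at h2
        rw [← h2]
        exact (hagree (m-1) (by omega)).symm
      have hah0 : a ≤ h0 := by
        have := (List.isChain_cons.1 hRz).1
        rw [hz] at this
        exact this h0 (by simp)
      rcases eq_or_lt_of_le hah0 with heq0 | hlt0
      · -- heads equal : decided at level m+1
        have hGY : gfun (a :: y) (m + 1) = a :: gfun y m := by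
          by_cases hmu : m + 1 ≤ mu y a
          · rw [gY (m+1) (by omega), if_pos hmu]
            have hRz3 : List.IsChain (· ≤ ·) (a :: gfun y (m+1)) := Ra_of_le_mu hmu
            have hchz3 : List.IsChain (· ≤ ·) (gfun y (m+1)) := (List.isChain_cons.1 hRz3).2
            have hz3len : (gfun y (m+1)).length = m + 1 := length_gfun y (by omega)
            obtain ⟨h3, t3, hz3⟩ : ∃ h3 t3, gfun y (m+1) = h3 :: t3 := by
              cases hzc : gfun y (m+1) with
              | nil => rw [hzc] at hz3len; simp at hz3len
              | cons h3 t3 => exact ⟨h3, t3, rfl⟩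
            have ht3 : t3 = gfun y m := by
              have h1 : vstar (gfun y (m+1)) = gfun y m := vstar_gfun y (by omega)
              have h2 := chain'_vstar hchz3
              rw [h1, hz3] at h2
              simp only [List.tail_cons] at h2
              exact h2.symm
            have hah3 : a ≤ h3 := by
              have := (List.isChain_cons.1 hRz3).1
              rw [hz3] at this
              exact this h3 (by simp)
            have hh3h0 : h3 ≤ h0 := by
              have hc3 : List.IsChain (· ≤ ·) (h3 :: h0 :: t) := by
                rw [← hz, ← ht3, ← hz3]
                exact hchz3
              exact (List.isChain_cons_cons.1 hc3).1
            have h3a : h3 = a := le_antisymm (by rw [heq0]; exact hh3h0) hah3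
            rw [hz3, ht3, h3a]
          · rw [gY (m+1) (by omega), if_neg hmu]
            simp
        right
        refine ⟨m + 1, by rw [hlx, hly]; omega, ?_, ?_⟩
        · intro m' hm'
          rcases Nat.lt_or_ge m' m with hm'' | hm''
          · rw [gX m' (by omega), gY m' (by omega), if_pos (by omega), if_pos (by omega)]
            exact hagree m' hm''
          · have : m' = m := by omega
            subst this
            rw [gX m' (by omega), gY m' (by omega), if_neg (by omega), if_pos hkym,
              hz, ← heq0, htl]
        · rw [hGY, gX (m+1) (by omega), if_neg (by omega)]
          simp only [Nat.add_sub_cancel]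
          exact Or.inl hclt
      · -- heads differ : decided at level m
        right
        refine ⟨m, by rw [hlx, hly]; omega, ?_, ?_⟩
        · intro m' hm'
          rw [gX m' (by omega), gY m' (by omega), if_pos (by omega), if_pos (by omega)]
          exact hagree m' hm'
        · rw [gX m (by omega), gY m (by omega), if_neg (by omega), if_pos hkym, hz, htl]
          exact Or.inr ⟨rfl, hlt0⟩
    · -- 2b
      have hkk : mu x a = mu y a := by
        apply le_antisymm
        · refine le_mu_of_Ra (by omega) ?_
          rw [← hagree (mu x a) (by omega)]
          exact Ra_of_le_mu le_rfl
        · refine le_mu_of_Ra (by omega) ?_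
          rw [hagree (mu y a) (by omega)]
          exact Ra_of_le_mu le_rfl
      right
      refine ⟨m + 1, by rw [hlx, hly]; omega, ?_, ?_⟩
      · intro m' hm'
        rw [gX m' (by omega), gY m' (by omega), hkk]
        by_cases hmk : m' ≤ mu y a
        · rw [if_pos hmk, if_pos hmk]
          exact hagree m' (by omega)
        · rw [if_neg hmk, if_neg hmk, hagree (m'-1) (by omega)]
      · rw [gX (m+1) (by omega), gY (m+1) (by omega), if_neg (by omega), if_neg (by omega)]
        simp only [Nat.add_sub_cancel]
        exact Or.inl hclt

/-! ### assembly -/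

lemma vc_suffix_iff (b : α) {x y : List α} (hxy : x ≠ y) :
    VC x y ↔ VC (x ++ [b]) (y ++ [b]) := by
  constructor
  · exact vc_suffix b
  · intro hXY
    rcases vc_total hxy with h | h
    · exact h
    · exact absurd (vc_suffix b h) (fun hc => vc_asymm hXY hc)

lemma vc_prefix_iff (a : α) {x y : List α} (hxy : x ≠ y) :
    VC x y ↔ VC (a :: x) (a :: y) := by
  constructor
  · exact vc_prefix a
  · intro hXY
    rcases vc_total hxy with h | h
    · exact h
    · exact absurd (vc_prefix a h) (fun hc => vc_asymm hXY hc)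

lemma vc_prefix_list (u : List α) {x y : List α} (hxy : x ≠ y) :
    VC x y ↔ VC (u ++ x) (u ++ y) := by
  induction u with
  | nil => simp
  | cons a u ih =>
    have hne : u ++ x ≠ u ++ y := fun h => hxy (List.append_cancel_left h)
    rw [ih, vc_prefix_iff a hne]
    simp

lemma vc_suffix_list (v : List α) {x y : List α} (hxy : x ≠ y) :
    VC x y ↔ VC (x ++ v) (y ++ v) := by
  induction v using List.reverseRecOn with
  | nil => simp
  | append_singleton v b ih =>
    have hne : x ++ v ≠ y ++ v := fun h => hxy (List.append_cancel_right h)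
    rw [ih, vc_suffix_iff b hne]
    simp [← List.append_assoc]


/-- V-order is invariant under a common prefix and a common suffix: for any
strings `u`, `v` and distinct strings `x`, `y`,
`x ≺ y ⟺ uxv ≺ uyv`. -/
theorem vless_context_iff {α : Type*} [LinearOrder α]
    (u v x y : List α) (hxy : x ≠ y) :
    VLess x y ↔ VLess (u ++ x ++ v) (u ++ y ++ v) := by
  have h1 : x ++ v ≠ y ++ v := fun h => hxy (List.append_cancel_right h)
  have h2 : u ++ (x ++ v) ≠ u ++ (y ++ v) := fun h => h1 (List.append_cancel_left h)
  have h3 : u ++ x ++ v = u ++ (x ++ v) := by simp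
  have h4 : u ++ y ++ v = u ++ (y ++ v) := by simp
  rw [vless_iff_vc hxy, vc_suffix_list v hxy, vc_prefix_list u h1, h3, h4,
    vless_iff_vc h2]
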